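/- Let E be a real Banach space, P ⊆ E a cone with nonempty interior, D a cone metric on a nonempty set X, and d(x,y) = inf{‖u‖ : u ∈ E, D(x,y) ≤ u} its equivalent metric. For any sequence (x_n) in X and x ∈ X, d(x_n, x) → 0 as n → ∞ if and only if for every c ∈ E with c in the interior of P there exists N such that for all n ≥ N, c − D(x_n, x) lies in the interior of P (i.e., x_n → x in the cone metric D). -/

import Mathlib

/-- `P` is a cone in the real Banach space `E`. -/
def IsCone {E : Type*} [NormedAddCommGroup E] [NormedSpace ℝ E] (P : Set E) : Prop :=
  IsClosed P ∧ P.Nonempty ∧ P ≠ {0} ∧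
  (∀ a b : ℝ, 0 ≤ a → 0 ≤ b → ∀ x ∈ P, ∀ y ∈ P, a • x + b • y ∈ P) ∧
  (∀ x ∈ P, -x ∈ P → x = 0)

/-- The partial order induced by the cone `P`: `x ≤ y` iff `y - x ∈ P`. -/
def coneLE {E : Type*} [NormedAddCommGroup E] [NormedSpace ℝ E] (P : Set E) (x y : E) : Prop :=
  y - x ∈ P

/-- `D : X → X → E` is a cone metric with respect to the cone `P`. -/
def IsConeMetric {E X : Type*} [NormedAddCommGroup E] [NormedSpace ℝ E]
    (P : Set E) (D : X → X → E) : Prop :=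
  (∀ x y, coneLE P 0 (D x y)) ∧
  (∀ x y : X, D x y = 0 ↔ x = y) ∧
  (∀ x y, D x y = D y x) ∧
  (∀ x y z, coneLE P (D x y) (D x z + D z y))

/-- The equivalent (real-valued) metric of the cone metric `D`:
`d(x,y) = inf {‖u‖ : D x y ≤ u}`. -/
noncomputable def eqMetric {E X : Type*} [NormedAddCommGroup E] [NormedSpace ℝ E]
    (P : Set E) (D : X → X → E) (x y : X) : ℝ :=
  sInf {r : ℝ | ∃ u : E, coneLE P (D x y) u ∧ ‖u‖ = r}

theorem stmt2 {E X : Type*} [NormedAddCommGroup E] [NormedSpace ℝ E] [CompleteSpace E]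
    [Nonempty X] (P : Set E) (hP : IsCone P) (hPint : (interior P).Nonempty)
    (D : X → X → E) (hD : IsConeMetric P D)
    (x : ℕ → X) (a : X) :
    Filter.Tendsto (fun n => eqMetric P D (x n) a) Filter.atTop (nhds 0) ↔
      ∀ c ∈ interior P, ∃ N : ℕ, ∀ n ≥ N, c - D (x n) a ∈ interior P := by
  obtain ⟨hclosed, ⟨p0, hp0⟩, hne, hadd, hpt⟩ := hP
  have h0P : (0:E) ∈ P := by
    have := hadd 0 0 le_rfl le_rfl p0 hp0 p0 hp0
    simpa using this
  have haddP : ∀ u ∈ P, ∀ v ∈ P, u + v ∈ P := by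
    intro u hu v hv
    have := hadd 1 1 zero_le_one zero_le_one u hu v hv
    simpa using this
  have hSne : ∀ y z : X, ({r : ℝ | ∃ u : E, coneLE P (D y z) u ∧ ‖u‖ = r}).Nonempty :=
    fun y z => ⟨‖D y z‖, D y z, by simpa [coneLE] using h0P, rfl⟩
  have hSbdd : ∀ y z : X, BddBelow {r : ℝ | ∃ u : E, coneLE P (D y z) u ∧ ‖u‖ = r} :=
    fun y z => ⟨0, fun r ⟨u, _, hu⟩ => hu ▸ norm_nonneg u⟩
  have hle : ∀ (y z : X) (u : E), coneLE P (D y z) u → eqMetric P D y z ≤ ‖u‖ :=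
    fun y z u hu => csInf_le (hSbdd y z) ⟨u, hu, rfl⟩
  have hnonneg : ∀ y z, 0 ≤ eqMetric P D y z :=
    fun y z => le_csInf (hSne y z) fun r ⟨u, _, hu⟩ => hu ▸ norm_nonneg u
  rw [Metric.tendsto_atTop]
  constructor
  · intro h c hc
    rw [mem_interior_iff_mem_nhds, Metric.mem_nhds_iff] at hc
    obtain ⟨ε, hε, hball⟩ := hc
    obtain ⟨N, hN⟩ := h (ε/2) (by linarith)
    refine ⟨N, fun n hn => ?_⟩
    have hd := hN n hn
    rw [Real.dist_eq, sub_zero, abs_of_nonneg (hnonneg _ _)] at hd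
    have hlt : eqMetric P D (x n) a < ε := by linarith
    obtain ⟨r, ⟨u, huD, hur⟩, hr⟩ := exists_lt_of_csInf_lt (hSne _ _) hlt
    have hulrε : ‖u‖ < ε := by rw [hur]; exact hr
    rw [mem_interior]
    refine ⟨Metric.ball (c - D (x n) a) (ε - ‖u‖), ?_, Metric.isOpen_ball, ?_⟩
    · intro v hv
      rw [Metric.mem_ball, dist_eq_norm] at hv
      have h1 : (c - u) + (v - (c - D (x n) a)) ∈ P := by
        apply hball
        rw [Metric.mem_ball, dist_eq_norm]
        have heq : (c - u) + (v - (c - D (x n) a)) - c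
            = (v - (c - D (x n) a)) + (-u) := by abel
        calc ‖(c - u) + (v - (c - D (x n) a)) - c‖
            = ‖(v - (c - D (x n) a)) + (-u)‖ := by rw [heq]
          _ ≤ ‖v - (c - D (x n) a)‖ + ‖u‖ := by
              simpa using norm_add_le (v - (c - D (x n) a)) (-u)
          _ < (ε - ‖u‖) + ‖u‖ := by linarith
          _ = ε := by ring
      have h2 : u - D (x n) a ∈ P := huD
      have hsum := haddP _ h1 _ h2
      have heq2 : (c - u) + (v - (c - D (x n) a)) + (u - D (x n) a) = v := by abel
      rwa [heq2] at hsum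
    · rw [Metric.mem_ball, dist_self]
      linarith
  · intro h ε hε
    obtain ⟨c₀, hc₀⟩ := hPint
    set t : ℝ := ε / (2 * (‖c₀‖ + 1)) with ht
    have hnorm_pos : (0:ℝ) < ‖c₀‖ + 1 := by positivity
    have htpos : 0 < t := by positivity
    have hc : t • c₀ ∈ interior P := by
      have hmap : IsOpenMap (fun y : E => t • y) := isOpenMap_smul₀ (ne_of_gt htpos)
      have hopen : IsOpen ((fun y : E => t • y) '' interior P) := hmap _ isOpen_interior
      have hsub : ((fun y : E => t • y) '' interior P) ⊆ P := by
        rintro _ ⟨w, hw, rfl⟩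
        have := hadd t 0 (le_of_lt htpos) le_rfl w (interior_subset hw) w (interior_subset hw)
        simpa using this
      exact interior_maximal hsub hopen ⟨c₀, hc₀, rfl⟩
    obtain ⟨N, hN⟩ := h (t • c₀) hc
    refine ⟨N, fun n hn => ?_⟩
    have hmem : coneLE P (D (x n) a) (t • c₀) := interior_subset (hN n hn)
    have hd : eqMetric P D (x n) a ≤ ‖t • c₀‖ := hle _ _ _ hmem
    have hnorm : ‖t • c₀‖ = t * ‖c₀‖ := by
      rw [norm_smul, Real.norm_eq_abs, abs_of_pos htpos]
    have hhalf : t * (‖c₀‖ + 1) = ε / 2 := by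
      field_simp [ht]
      have h2 : t * (2 * (‖c₀‖ + 1)) = ε := by
        rw [ht]; exact div_mul_cancel₀ _ (by positivity)
      linear_combination h2
    have : eqMetric P D (x n) a < ε := by nlinarith [norm_nonneg c₀]
    rw [Real.dist_eq, sub_zero, abs_of_nonneg (hnonneg _ _)]
    exact this
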